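/- Vorticity accumulation on the boundary for the explicit example: for every continuous function ψ : [0,1] → ℝ, lim_{ε→0⁺} ∫_0¹ ω₂^ε(z) ψ(z) dz = ∫_0¹ (1 − 2z) ψ(z) dz + ψ(0) − ψ(1), where ω₂^ε(z) = 1 − 2z + (1−2ε) · ((1−e^{−1/√ε})/(1−e^{−2/√ε})) · ε^{−1/2} (e^{−z/√ε} − e^{−(1−z)/√ε}). -/

import Mathlib

open Real Filter MeasureTheory Set intervalIntegral

/-- The exact vorticity component `ω₂^ε` for the data `f₁(z) = 1 + z(1−z)`. -/
noncomputable def omega2Exact (ε z : ℝ) : ℝ :=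
  1 - 2 * z
    + (1 - 2 * ε)
      * ((1 - Real.exp (-1 / Real.sqrt ε)) / (1 - Real.exp (-2 / Real.sqrt ε)))
      * ε ^ (-(1:ℝ)/2)
      * (Real.exp (-z / Real.sqrt ε) - Real.exp (-(1 - z) / Real.sqrt ε))

lemma hsq_inv : Tendsto (fun ε : ℝ => (Real.sqrt ε)⁻¹) (nhdsWithin 0 (Set.Ioi 0)) atTop := by
  apply tendsto_inv_nhdsGT_zero.comp
  rw [tendsto_nhdsWithin_iff]
  constructor
  · exact (Real.continuous_sqrt.tendsto' 0 0 Real.sqrt_zero).mono_left nhdsWithin_le_nhds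
  · filter_upwards [self_mem_nhdsWithin] with ε (hε : 0 < ε)
    exact Real.sqrt_pos.2 hε

lemma mul_exp_decay {δ : ℝ} (hδ : 0 < δ) :
    Tendsto (fun t : ℝ => t * Real.exp (-(δ * t))) atTop (nhds 0) := by
  have h1 : Tendsto (fun x : ℝ => x ^ 1 * Real.exp (-x)) atTop (nhds 0) :=
    Real.tendsto_pow_mul_exp_neg_atTop_nhds_zero 1
  have h2 : Tendsto (fun t : ℝ => δ * t) atTop atTop :=
    Tendsto.const_mul_atTop hδ tendsto_id
  have := ((h1.comp h2).const_mul δ⁻¹)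
  rw [mul_zero] at this
  refine this.congr fun t => ?_
  simp only [Function.comp, pow_one]
  field_simp

lemma integral_peakL {ε : ℝ} (hε : 0 < ε) :
    ∫ z in Set.Icc (0:ℝ) 1, (Real.sqrt ε)⁻¹ * Real.exp (-z / Real.sqrt ε)
      = 1 - Real.exp (-(Real.sqrt ε)⁻¹) := by
  have hc : 0 < Real.sqrt ε := Real.sqrt_pos.2 hε
  rw [MeasureTheory.integral_Icc_eq_integral_Ioc,
    ← intervalIntegral.integral_of_le (zero_le_one), intervalIntegral.integral_const_mul]
  have : ∀ z : ℝ, -z / Real.sqrt ε = z * (-(Real.sqrt ε)⁻¹) := by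
    intro z; field_simp
  simp_rw [this]
  rw [intervalIntegral.integral_comp_mul_right Real.exp (neg_ne_zero.2 (inv_ne_zero hc.ne'))]
  rw [integral_exp]
  simp only [zero_mul, one_mul, Real.exp_zero, smul_eq_mul]
  field_simp
  ring

lemma integral_peakR {ε : ℝ} (hε : 0 < ε) :
    ∫ z in Set.Icc (0:ℝ) 1, (Real.sqrt ε)⁻¹ * Real.exp (-(1 - z) / Real.sqrt ε)
      = 1 - Real.exp (-(Real.sqrt ε)⁻¹) := by
  have hc : 0 < Real.sqrt ε := Real.sqrt_pos.2 hε
  rw [MeasureTheory.integral_Icc_eq_integral_Ioc,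
    ← intervalIntegral.integral_of_le (zero_le_one), intervalIntegral.integral_const_mul]
  have : ∀ z : ℝ, -(1 - z) / Real.sqrt ε = (z - 1) * (Real.sqrt ε)⁻¹ := by
    intro z; field_simp; ring
  simp_rw [this]
  rw [intervalIntegral.integral_comp_sub_right (fun w => Real.exp (w * (Real.sqrt ε)⁻¹)) 1,
    intervalIntegral.integral_comp_mul_right Real.exp (inv_ne_zero hc.ne')]
  rw [integral_exp]
  simp only [zero_sub, sub_self, smul_eq_mul, zero_mul, Real.exp_zero]
  field_simp

lemma exp_inv_sqrt_tendsto (c : ℝ) (hc : 0 < c) :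
    Tendsto (fun ε : ℝ => Real.exp (-(c * (Real.sqrt ε)⁻¹))) (nhdsWithin 0 (Set.Ioi 0))
      (nhds 0) :=
  Real.tendsto_exp_atBot.comp
    (tendsto_neg_atBot_iff.2 (Tendsto.const_mul_atTop hc hsq_inv))

lemma peak_bound_tendsto {δ : ℝ} (hδ : 0 < δ) :
    Tendsto (fun ε : ℝ => (Real.sqrt ε)⁻¹ * Real.exp (-(δ * (Real.sqrt ε)⁻¹)))
      (nhdsWithin 0 (Set.Ioi 0)) (nhds 0) :=
  ((mul_exp_decay hδ).comp hsq_inv).congr fun ε => by simp [Function.comp]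

lemma peakL_tendsto (ψ : ℝ → ℝ) (hψ : ContinuousOn ψ (Set.Icc 0 1)) :
    Tendsto (fun ε : ℝ =>
        ∫ z in Set.Icc (0:ℝ) 1, ((Real.sqrt ε)⁻¹ * Real.exp (-z / Real.sqrt ε)) * ψ z)
      (nhdsWithin 0 (Set.Ioi 0)) (nhds (ψ 0)) := by
  have h := tendsto_setIntegral_peak_smul_of_integrableOn_of_tendsto
    (μ := volume) (l := nhdsWithin (0:ℝ) (Set.Ioi 0)) (x₀ := (0:ℝ))
    (φ := fun ε z => (Real.sqrt ε)⁻¹ * Real.exp (-z / Real.sqrt ε)) (g := ψ)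
    (s := Set.Icc (0:ℝ) 1)
    measurableSet_Icc measurableSet_Icc subset_rfl self_mem_nhdsWithin
    measure_Icc_lt_top.ne
    (Eventually.of_forall fun ε => fun x _ => by positivity)
    ?_ ?_ ?_ (hψ.integrableOn_Icc) (hψ 0 ⟨le_refl 0, zero_le_one⟩)
  · exact h.congr fun ε => by simp [smul_eq_mul]
  · -- uniform convergence away from 0
    intro u hu h0u
    rcases Metric.isOpen_iff.1 hu 0 h0u with ⟨δ, hδ, hball⟩
    rw [Metric.tendstoUniformlyOn_iff]
    intro ρ hρ
    filter_upwards [(peak_bound_tendsto hδ).eventually (gt_mem_nhds hρ),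
      self_mem_nhdsWithin] with ε hbound (hε : 0 < ε) x hx
    have hc : 0 < Real.sqrt ε := Real.sqrt_pos.2 hε
    have hxδ : δ ≤ x := by
      rcases hx with ⟨⟨hx0, hx1⟩, hxu⟩
      by_contra h
      push_neg at h
      exact hxu (hball (by simpa [Real.dist_eq, abs_of_nonneg hx0] using h))
    have key : (Real.sqrt ε)⁻¹ * Real.exp (-x / Real.sqrt ε)
        ≤ (Real.sqrt ε)⁻¹ * Real.exp (-(δ * (Real.sqrt ε)⁻¹)) := by
      apply mul_le_mul_of_nonneg_left _ (by positivity)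
      apply Real.exp_le_exp.2
      rw [neg_div, neg_le_neg_iff, ← div_eq_mul_inv]
      gcongr
    rw [Pi.zero_apply, dist_comm, Real.dist_eq, sub_zero]
    have hnn : (0:ℝ) ≤ (Real.sqrt ε)⁻¹ * Real.exp (-x / Real.sqrt ε) := by positivity
    rw [abs_of_nonneg hnn]
    calc (Real.sqrt ε)⁻¹ * Real.exp (-x / Real.sqrt ε)
        ≤ (Real.sqrt ε)⁻¹ * Real.exp (-(δ * (Real.sqrt ε)⁻¹)) := key
      _ < ρ := hbound
  · -- integral tends to 1
    have : Tendsto (fun ε : ℝ => 1 - Real.exp (-(Real.sqrt ε)⁻¹))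
        (nhdsWithin 0 (Set.Ioi 0)) (nhds 1) := by
      have := (tendsto_const_nhds (x := (1:ℝ))
        (f := nhdsWithin (0:ℝ) (Set.Ioi 0))).sub (exp_inv_sqrt_tendsto 1 one_pos)
      simpa using this.congr fun ε => by simp
    refine Tendsto.congr' ?_ this
    filter_upwards [self_mem_nhdsWithin] with ε (hε : 0 < ε)
    exact (integral_peakL hε).symm
  · -- measurability
    filter_upwards with ε
    exact (Continuous.aestronglyMeasurable (by fun_prop)).restrict

lemma peakR_tendsto (ψ : ℝ → ℝ) (hψ : ContinuousOn ψ (Set.Icc 0 1)) :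
    Tendsto (fun ε : ℝ =>
        ∫ z in Set.Icc (0:ℝ) 1, ((Real.sqrt ε)⁻¹ * Real.exp (-(1 - z) / Real.sqrt ε)) * ψ z)
      (nhdsWithin 0 (Set.Ioi 0)) (nhds (ψ 1)) := by
  have h := tendsto_setIntegral_peak_smul_of_integrableOn_of_tendsto
    (μ := volume) (l := nhdsWithin (0:ℝ) (Set.Ioi 0)) (x₀ := (1:ℝ))
    (φ := fun ε z => (Real.sqrt ε)⁻¹ * Real.exp (-(1 - z) / Real.sqrt ε)) (g := ψ)
    (s := Set.Icc (0:ℝ) 1)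
    measurableSet_Icc measurableSet_Icc subset_rfl self_mem_nhdsWithin
    measure_Icc_lt_top.ne
    (Eventually.of_forall fun ε => fun x _ => by positivity)
    ?_ ?_ ?_ (hψ.integrableOn_Icc) (hψ 1 ⟨zero_le_one, le_refl 1⟩)
  · exact h.congr fun ε => by simp [smul_eq_mul]
  · intro u hu h1u
    rcases Metric.isOpen_iff.1 hu 1 h1u with ⟨δ, hδ, hball⟩
    rw [Metric.tendstoUniformlyOn_iff]
    intro ρ hρ
    filter_upwards [(peak_bound_tendsto hδ).eventually (gt_mem_nhds hρ),
      self_mem_nhdsWithin] with ε hbound (hε : 0 < ε) x hx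
    have hc : 0 < Real.sqrt ε := Real.sqrt_pos.2 hε
    have hxδ : δ ≤ 1 - x := by
      rcases hx with ⟨⟨hx0, hx1⟩, hxu⟩
      by_contra h
      push_neg at h
      refine hxu (hball ?_)
      rw [Metric.mem_ball, Real.dist_eq, abs_of_nonpos (by linarith)]
      linarith
    have key : (Real.sqrt ε)⁻¹ * Real.exp (-(1 - x) / Real.sqrt ε)
        ≤ (Real.sqrt ε)⁻¹ * Real.exp (-(δ * (Real.sqrt ε)⁻¹)) := by
      apply mul_le_mul_of_nonneg_left _ (by positivity)
      apply Real.exp_le_exp.2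
      rw [neg_div, neg_le_neg_iff, ← div_eq_mul_inv]
      gcongr
    rw [Pi.zero_apply, dist_comm, Real.dist_eq, sub_zero]
    rw [abs_of_nonneg (by positivity)]
    exact lt_of_le_of_lt key hbound
  · have : Tendsto (fun ε : ℝ => 1 - Real.exp (-(Real.sqrt ε)⁻¹))
        (nhdsWithin 0 (Set.Ioi 0)) (nhds 1) := by
      have := (tendsto_const_nhds (x := (1:ℝ))
        (f := nhdsWithin (0:ℝ) (Set.Ioi 0))).sub (exp_inv_sqrt_tendsto 1 one_pos)
      simpa using this.congr fun ε => by simp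
    refine Tendsto.congr' ?_ this
    filter_upwards [self_mem_nhdsWithin] with ε (hε : 0 < ε)
    exact (integral_peakR hε).symm
  · filter_upwards with ε
    exact (Continuous.aestronglyMeasurable (by fun_prop)).restrict

lemma coef_tendsto :
    Tendsto (fun ε : ℝ => (1 - 2 * ε)
        * ((1 - Real.exp (-1 / Real.sqrt ε)) / (1 - Real.exp (-2 / Real.sqrt ε))))
      (nhdsWithin 0 (Set.Ioi 0)) (nhds 1) := by
  have h1 : Tendsto (fun ε : ℝ => Real.exp (-1 / Real.sqrt ε))
      (nhdsWithin 0 (Set.Ioi 0)) (nhds 0) :=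
    (exp_inv_sqrt_tendsto 1 one_pos).congr fun ε => by rw [neg_div, div_eq_mul_inv]
  have h2 : Tendsto (fun ε : ℝ => Real.exp (-2 / Real.sqrt ε))
      (nhdsWithin 0 (Set.Ioi 0)) (nhds 0) :=
    (exp_inv_sqrt_tendsto 2 two_pos).congr fun ε => by rw [neg_div, div_eq_mul_inv]
  have hlin : Tendsto (fun ε : ℝ => 1 - 2 * ε) (nhdsWithin 0 (Set.Ioi 0)) (nhds 1) := by
    have : Tendsto (fun ε : ℝ => 1 - 2 * ε) (nhds 0) (nhds (1 - 2 * 0)) :=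
      (Continuous.tendsto (by continuity) 0)
    simpa using this.mono_left nhdsWithin_le_nhds
  have hfrac := (tendsto_const_nhds (x := (1:ℝ)).sub h1).div
    ((tendsto_const_nhds (x := (1:ℝ))).sub h2) (by norm_num)
  simpa using hlin.mul hfrac

theorem statement17' (ψ : ℝ → ℝ) (hψ : ContinuousOn ψ (Set.Icc 0 1)) :
    Filter.Tendsto
      (fun ε : ℝ => ∫ z in (0:ℝ)..1, omega2Exact ε z * ψ z)
      (nhdsWithin 0 (Set.Ioi 0))
      (nhds ((∫ z in (0:ℝ)..1, (1 - 2 * z) * ψ z) + ψ 0 - ψ 1)) := by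
  have hψ' : ContinuousOn ψ (Set.uIcc 0 1) := by
    rw [Set.uIcc_of_le zero_le_one]; exact hψ
  set I₀ : ℝ := ∫ z in (0:ℝ)..1, (1 - 2 * z) * ψ z with hI₀
  set C : ℝ → ℝ := fun ε => (1 - 2 * ε)
      * ((1 - Real.exp (-1 / Real.sqrt ε)) / (1 - Real.exp (-2 / Real.sqrt ε))) with hC
  set A : ℝ → ℝ := fun ε =>
      ∫ z in Set.Icc (0:ℝ) 1, ((Real.sqrt ε)⁻¹ * Real.exp (-z / Real.sqrt ε)) * ψ z with hA
  set B : ℝ → ℝ := fun ε =>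
      ∫ z in Set.Icc (0:ℝ) 1, ((Real.sqrt ε)⁻¹ * Real.exp (-(1 - z) / Real.sqrt ε)) * ψ z
    with hB
  have hlim : Tendsto (fun ε => I₀ + C ε * (A ε - B ε)) (nhdsWithin 0 (Set.Ioi 0))
      (nhds (I₀ + 1 * (ψ 0 - ψ 1))) :=
    tendsto_const_nhds.add (coef_tendsto.mul ((peakL_tendsto ψ hψ).sub (peakR_tendsto ψ hψ)))
  have htarget : I₀ + ψ 0 - ψ 1 = I₀ + 1 * (ψ 0 - ψ 1) := by ring
  rw [htarget]
  refine hlim.congr' ?_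
  filter_upwards [self_mem_nhdsWithin] with ε (hε : 0 < ε)
  have hc : 0 < Real.sqrt ε := Real.sqrt_pos.2 hε
  have hrpow : ε ^ (-(1:ℝ)/2) = (Real.sqrt ε)⁻¹ := by
    rw [neg_div, Real.rpow_neg hε.le, ← Real.sqrt_eq_rpow]
  have hrw : ∀ z : ℝ, omega2Exact ε z * ψ z
      = (1 - 2 * z) * ψ z
        + (C ε * (((Real.sqrt ε)⁻¹ * Real.exp (-z / Real.sqrt ε)) * ψ z)
          - C ε * (((Real.sqrt ε)⁻¹ * Real.exp (-(1 - z) / Real.sqrt ε)) * ψ z)) := by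
    intro z
    simp only [omega2Exact, hrpow, hC]
    ring
  have cont1 : ContinuousOn (fun z : ℝ => (1 - 2 * z) * ψ z) (Set.uIcc 0 1) :=
    (by fun_prop : Continuous fun z : ℝ => 1 - 2 * z).continuousOn.mul hψ'
  have cont2 : ContinuousOn
      (fun z : ℝ => C ε * (((Real.sqrt ε)⁻¹ * Real.exp (-z / Real.sqrt ε)) * ψ z))
      (Set.uIcc 0 1) :=
    continuousOn_const.mul ((by fun_prop :
      Continuous fun z : ℝ => (Real.sqrt ε)⁻¹ * Real.exp (-z / Real.sqrt ε)).continuousOn.mul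
      hψ')
  have cont3 : ContinuousOn
      (fun z : ℝ => C ε * (((Real.sqrt ε)⁻¹ * Real.exp (-(1 - z) / Real.sqrt ε)) * ψ z))
      (Set.uIcc 0 1) :=
    continuousOn_const.mul ((by fun_prop :
      Continuous fun z : ℝ =>
        (Real.sqrt ε)⁻¹ * Real.exp (-(1 - z) / Real.sqrt ε)).continuousOn.mul hψ')
  have i1 := cont1.intervalIntegrable (μ := volume)
  have i2 := cont2.intervalIntegrable (μ := volume)
  have i3 := cont3.intervalIntegrable (μ := volume)
  have hIcc : ∀ f : ℝ → ℝ, (∫ z in (0:ℝ)..1, f z) = ∫ z in Set.Icc (0:ℝ) 1, f z := by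
    intro f
    rw [intervalIntegral.integral_of_le zero_le_one, MeasureTheory.integral_Icc_eq_integral_Ioc]
  symm
  calc ∫ z in (0:ℝ)..1, omega2Exact ε z * ψ z
      = ∫ z in (0:ℝ)..1, ((1 - 2 * z) * ψ z
          + (C ε * (((Real.sqrt ε)⁻¹ * Real.exp (-z / Real.sqrt ε)) * ψ z)
            - C ε * (((Real.sqrt ε)⁻¹ * Real.exp (-(1 - z) / Real.sqrt ε)) * ψ z))) := by
        simp_rw [hrw]
    _ = I₀ + C ε * (A ε - B ε) := by
        rw [intervalIntegral.integral_add i1 (i2.sub i3), intervalIntegral.integral_sub i2 i3,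
          intervalIntegral.integral_const_mul, intervalIntegral.integral_const_mul,
          hIcc fun z => ((Real.sqrt ε)⁻¹ * Real.exp (-z / Real.sqrt ε)) * ψ z,
          hIcc fun z => ((Real.sqrt ε)⁻¹ * Real.exp (-(1 - z) / Real.sqrt ε)) * ψ z,
          hI₀, hA, hB]
        ring

/-- Vorticity accumulation on the boundary for the explicit example:
for every continuous `ψ : [0,1] → ℝ`,
`lim_{ε→0⁺} ∫₀¹ ω₂^ε(z) ψ(z) dz = ∫₀¹ (1−2z) ψ(z) dz + ψ(0) − ψ(1)`. -/
theorem statement17 (ψ : ℝ → ℝ) (hψ : ContinuousOn ψ (Set.Icc 0 1)) :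
    Filter.Tendsto
      (fun ε : ℝ => ∫ z in (0:ℝ)..1, omega2Exact ε z * ψ z)
      (nhdsWithin 0 (Set.Ioi 0))
      (nhds ((∫ z in (0:ℝ)..1, (1 - 2 * z) * ψ z) + ψ 0 - ψ 1)) := by
  exact statement17' ψ hψ
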